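/- arXiv:0804.1644 — 15 statements merged into one kernel-verified Lean document; each statement's English description precedes it below -/
import Mathlib

section
/- Let R be an associative unital ℂ-algebra, q, p ∈ R with qp − pq = h·1 for some h ∈ ℂ, and suppose q is invertible in R. For a parameter b ∈ ℂ, set x = q⁻¹ and y = −bq − q²p. Then xy − yx = h·1; i.e., the birational change of variables (q,p) ↦ (x,y) of Takano type for the quantum Painlevé II (chart 0) is a canonical transformation. -/
/-- Takano chart-0 change of variables for quantum Painlevé II is canonical:
if `q p - p q = h • 1` and `q` is invertible, then with `x = q⁻¹` and
`y = -b q - q² p` one has `x y - y x = h • 1`. -/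
theorem quantum_PII_chart0_canonical
    {R : Type*} [Ring R] [Algebra ℂ R]
    (h b : ℂ) (q p : R) [Invertible q]
    (hcomm : q * p - p * q = h • (1 : R))
    (x y : R) (hx : x = ⅟q) (hy : y = -(b • q) - q ^ 2 * p) :
    x * y - y * x = h • (1 : R) := by
  subst hx hy
  have h1 : ⅟q * q = 1 := invOf_mul_self q
  have h2 : q * ⅟q = 1 := mul_invOf_self q
  have hpq : q * p = p * q + h • 1 := by rw [← hcomm]; abel
  have h3 : ⅟q * (q ^ 2 * p) = q * p := by
    rw [pow_two, mul_assoc q q p, ← mul_assoc, h1, one_mul]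
  have h4 : q ^ 2 * p * ⅟q = q * p + h • 1 := by
    rw [pow_two, mul_assoc q q p]; nth_rewrite 1 [hpq]; simp [mul_add, add_mul, mul_smul_comm, smul_mul_assoc, mul_assoc, h2]
  rw [mul_sub, sub_mul, mul_neg, neg_mul, mul_smul_comm, smul_mul_assoc, h1, h2, h3, h4]
  abel
end

section
/- Let R be an associative unital ℂ-algebra, q, p ∈ R with qp − pq = h·1 for some h ∈ ℂ, and suppose q is invertible in R. For parameters a, t ∈ ℂ, set x = q⁻¹ and y = 2q⁴ − q²p + tq² − aq. Then xy − yx = h·1; i.e., the Takano chart-1 change of variables for the quantum Painlevé II equation is a canonical transformation. -/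
/-- Takano chart-1 change of variables for quantum Painlevé II is canonical:
if `q p - p q = h • 1` and `q` is invertible, then with `x = q⁻¹` and
`y = 2q⁴ - q²p + t q² - a q` one has `x y - y x = h • 1`. -/
theorem quantum_PII_chart1_canonical
    {R : Type*} [Ring R] [Algebra ℂ R]
    (h a t : ℂ) (q p : R) [Invertible q]
    (hcomm : q * p - p * q = h • (1 : R))
    (x y : R) (hx : x = ⅟q)
    (hy : y = (2 : ℂ) • q ^ 4 - q ^ 2 * p + t • q ^ 2 - a • q) :
    x * y - y * x = h • (1 : R) := by
  subst hx hy
  have hqp : q * p = p * q + h • (1 : R) := by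
    rw [← hcomm]; abel
  have h2 : q ^ 2 * (p * ⅟q) = q * p + h • (1 : R) := by
    rw [pow_two, mul_assoc q q (p * ⅟q), ← mul_assoc q p ⅟q, hqp]
    simp [mul_add, add_mul, mul_assoc, mul_smul_comm, smul_mul_assoc]
    exact hqp
  have h4 : ⅟q * q ^ 4 = q ^ 3 := by
    rw [show (4:ℕ) = 1 + 3 from rfl, pow_add, ← mul_assoc, pow_one, invOf_mul_self, one_mul]
  have h4' : q ^ 4 * ⅟q = q ^ 3 := by
    rw [show (4:ℕ) = 3 + 1 from rfl, pow_add, mul_assoc, pow_one, mul_invOf_self, mul_one]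
  have h2a : ⅟q * q ^ 2 = q := by
    rw [pow_two, ← mul_assoc, invOf_mul_self, one_mul]
  have h2b : q ^ 2 * ⅟q = q := by
    rw [pow_two, mul_assoc, mul_invOf_self, mul_one]
  simp only [mul_sub, sub_mul, mul_add, add_mul, mul_smul_comm, smul_mul_assoc,
    ← mul_assoc, h4, h4', h2a, h2b, invOf_mul_self, mul_invOf_self]
  rw [mul_assoc (q^2) p ⅟q, h2]
  abel
end

section
/- Let R be an associative unital ℂ-algebra, q, p ∈ R with qp − pq = h·1 (h ∈ ℂ), q invertible, and b, t ∈ ℂ. Put H_II = (1/2)p² − q²p − (t/2)p − bq, x = q⁻¹ and y = −bq − q²p. Then [x, H_II] = h·(x⁴y + (b−h)x³ + (t/2)x² + 1) and [y, H_II] = h·(−2x³y² − txy + 3(h−b)x²y − b(b−h)x − (bt/2)), where [u,v] = uv − vu; that is, the quantum Painlevé II system transformed to the chart-0 coordinates (x,y) is given by the polynomial vector field dx/dt = x⁴y + (b−h)x³ + (t/2)x² + 1, dy/dt = −2x³y² − txy + 3(h−b)x²y − b(b−h)x − bt/2. -/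
section
variable {R : Type*} [Ring R] [Algebra ℂ R] (h : ℂ) (q p : R) [Invertible q]

set_option linter.unusedSectionVars false

private lemma pq (hcomm : q * p - p * q = h • (1 : R)) (X : R) :
    p * (q * X) = q * (p * X) - h • X := by
  have e : p * q = q * p - h • (1:R) := by rw [← hcomm]; abel
  rw [← mul_assoc, e, sub_mul, mul_assoc, smul_mul_assoc, one_mul]

private lemma pq1 (hcomm : q * p - p * q = h • (1 : R)) :
    p * q = q * p - h • (1 : R) := by rw [← hcomm]; abel

private lemma pinv1 (hcomm : q * p - p * q = h • (1 : R)) :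
    p * ⅟q = ⅟q * p + h • (⅟q * ⅟q) := by
  have e : p * q = q * p - h • (1:R) := by rw [← hcomm]; abel
  have h1 : ⅟q * (p * q) * ⅟q = ⅟q * p := by
    rw [← mul_assoc, mul_assoc _ q, mul_invOf_self, mul_one]
  rw [e] at h1
  have h2 : ⅟q * (q * p - h • (1:R)) * ⅟q
      = p * ⅟q - h • (⅟q * ⅟q) := by
    rw [mul_sub, sub_mul, ← mul_assoc, invOf_mul_self, one_mul,
      mul_smul_comm, mul_one, smul_mul_assoc]
  rw [h2] at h1
  rw [← h1]; abel

private lemma pinv (hcomm : q * p - p * q = h • (1 : R)) (X : R) :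
    p * (⅟q * X) = ⅟q * (p * X) + h • (⅟q * (⅟q * X)) := by
  rw [← mul_assoc, pinv1 h q p hcomm, add_mul, mul_assoc, smul_mul_assoc, mul_assoc]

private lemma qiq (X : R) : q * (⅟q * X) = X := by
  rw [← mul_assoc, mul_invOf_self, one_mul]

private lemma iqq (X : R) : ⅟q * (q * X) = X := by
  rw [← mul_assoc, invOf_mul_self, one_mul]

end

/-- The quantum Painlevé II system transformed to Takano chart-0 coordinates
`x = q⁻¹`, `y = -b q - q² p` is given by the polynomial vector field
`dx/dt = x⁴y + (b-h)x³ + (t/2)x² + 1`,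
`dy/dt = -2x³y² - t x y + 3(h-b)x²y - b(b-h)x - bt/2`. -/
theorem quantum_PII_chart0_vector_field
    {R : Type*} [Ring R] [Algebra ℂ R]
    (h b t : ℂ) (q p : R) [Invertible q]
    (hcomm : q * p - p * q = h • (1 : R))
    (H x y : R)
    (hH : H = (1 / 2 : ℂ) • p ^ 2 - q ^ 2 * p - (t / 2) • p - b • q)
    (hx : x = ⅟q) (hy : y = -(b • q) - q ^ 2 * p) :
    x * H - H * x
      = h • (x ^ 4 * y + (b - h) • x ^ 3 + (t / 2) • x ^ 2 + 1) ∧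
    y * H - H * y
      = h • (-((2 : ℂ) • (x ^ 3 * y ^ 2)) - t • (x * y)
          + (3 * (h - b)) • (x ^ 2 * y) - (b * (b - h)) • x
          - (b * t / 2) • (1 : R)) := by
  subst hH hx hy
  constructor <;>
  · simp only [pow_succ, pow_zero, one_mul, mul_add, add_mul, mul_sub, sub_mul,
      mul_neg, neg_mul, smul_mul_assoc, mul_smul_comm, smul_smul, smul_add,
      smul_sub, smul_neg, mul_assoc, mul_one, one_mul,
      pq h q p hcomm, pq1 h q p hcomm, pinv h q p hcomm, pinv1 h q p hcomm,
      qiq, iqq, mul_invOf_self, invOf_mul_self]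
    match_scalars <;> ring
end

section
/- Let R be an associative unital ℂ-algebra and x, y ∈ R with xy − yx = h·1 (h ∈ ℂ), and let b, t ∈ ℂ. Put H₀ = (1/2)x⁴y² + (b−h)x³y + (1/2)b(b−h)x² + (t/2)x²y + (bt/2)x + y (normally ordered, x-powers to the left). Then [x, H₀] = h·(x⁴y + (b−h)x³ + (t/2)x² + 1) and [y, H₀] = h·(−2x³y² − txy + 3(h−b)x²y − b(b−h)x − bt/2). Hence the transformed quantum Painlevé II system in the chart-0 coordinates is again a Hamiltonian system with the polynomial Hamiltonian H₀. -/
/-- The transformed quantum Painlevé II system in chart-0 coordinates is again a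
Hamiltonian system with polynomial Hamiltonian
`H₀ = (1/2)x⁴y² + (b-h)x³y + (1/2)b(b-h)x² + (t/2)x²y + (bt/2)x + y`. -/
theorem quantum_PII_chart0_hamiltonian
    {R : Type*} [Ring R] [Algebra ℂ R]
    (h b t : ℂ) (x y : R)
    (hcomm : x * y - y * x = h • (1 : R))
    (H₀ : R)
    (hH₀ : H₀ = (1 / 2 : ℂ) • (x ^ 4 * y ^ 2) + (b - h) • (x ^ 3 * y)
        + (1 / 2 * b * (b - h)) • x ^ 2 + (t / 2) • (x ^ 2 * y)
        + (b * t / 2) • x + y) :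
    x * H₀ - H₀ * x
      = h • (x ^ 4 * y + (b - h) • x ^ 3 + (t / 2) • x ^ 2 + 1) ∧
    y * H₀ - H₀ * y
      = h • (-((2 : ℂ) • (x ^ 3 * y ^ 2)) - t • (x * y)
          + (3 * (h - b)) • (x ^ 2 * y) - (b * (b - h)) • x
          - (b * t / 2) • (1 : R)) := by
  have hyx : y * x = x * y - h • (1 : R) := by
    rw [← hcomm]; noncomm_ring
  have hswap : ∀ z : R, y * (x * z) = x * (y * z) - h • z := by
    intro z
    rw [← mul_assoc, hyx, sub_mul, mul_assoc, smul_mul_assoc, one_mul]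
  subst hH₀
  constructor <;>
  · simp only [pow_succ, pow_zero, one_mul, mul_assoc, mul_add, add_mul, mul_sub,
      sub_mul, smul_mul_assoc, mul_smul_comm, hyx, hswap, mul_one, smul_sub,
      smul_add, smul_smul]
    module
end

section
/- Let R be an associative unital ℂ-algebra, q, p ∈ R with qp − pq = h·1 (h ∈ ℂ), q invertible, and a, b, t ∈ ℂ. Put H_III = q²p² − q²p + (a+b)qp − bq + tp, and set x = q⁻¹, y = −bq − q²p. Let H₀(x,y) = x²y² − tx²y + (−a+b−2h)xy − btx + y (normally ordered, x-powers to the left). Then [x, H_III] = [x, H₀(x,y)] and [y, H_III] = [y, H₀(x,y)]; that is, the quantum Painlevé III system is transformed in the chart-0 coordinates into the polynomial Hamiltonian system with Hamiltonian H₀. -/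
/-- In the Takano chart-0 coordinates `x = q⁻¹`, `y = -bq - q²p`, the quantum
Painlevé III system becomes the polynomial Hamiltonian system with
`H₀ = x²y² - tx²y + (-a+b-2h)xy - btx + y`. -/
theorem quantum_PIII_chart0_hamiltonian
    {R : Type*} [Ring R] [Algebra ℂ R]
    (h a b t : ℂ) (q p : R) [Invertible q]
    (hcomm : q * p - p * q = h • (1 : R))
    (H x y H₀ : R)
    (hH : H = q ^ 2 * p ^ 2 - q ^ 2 * p + (a + b) • (q * p) - b • q + t • p)
    (hx : x = ⅟q) (hy : y = -(b • q) - q ^ 2 * p)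
    (hH₀ : H₀ = x ^ 2 * y ^ 2 - t • (x ^ 2 * y) + (-a + b - 2 * h) • (x * y)
        - (b * t) • x + y) :
    x * H - H * x = x * H₀ - H₀ * x ∧
    y * H - H * y = y * H₀ - H₀ * y := by
  have hpq : p * q = q * p - h • (1 : R) := by
    have := hcomm; linear_combination (norm := noncomm_ring) -this
  have hxq : x * q = 1 := by rw [hx]; exact invOf_mul_self q
  have hxy : x * y = -(b • (1 : R)) - q * p := by
    rw [hx, hy, sq]
    rw [mul_sub, mul_neg, mul_smul_comm, ← mul_assoc, ← mul_assoc, invOf_mul_self, one_mul]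
  have hx2y : x * (x * y) = -(b • x) - p := by
    rw [hxy, hx]
    rw [mul_sub, mul_neg, mul_smul_comm, mul_one, ← mul_assoc, invOf_mul_self, one_mul, ← hx]
  have hxqq : x * (q ^ 2 * p) = q * p := by
    rw [hx, sq, ← mul_assoc, ← mul_assoc, invOf_mul_self, one_mul]
  have hpq2 : p * (q ^ 2 * p) = q ^ 2 * p ^ 2 - (2 * h) • (q * p) := by
    calc p * (q ^ 2 * p) = (p * q) * (q * p) := by noncomm_ring
      _ = (q * p - h • (1 : R)) * (q * p) := by rw [hpq]
      _ = q * ((p * q) * p) - h • (q * p) := by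
          rw [sub_mul, smul_mul_assoc, one_mul]
          have : (q * p) * (q * p) = q * ((p * q) * p) := by noncomm_ring
          rw [this]
      _ = q * ((q * p - h • (1 : R)) * p) - h • (q * p) := by rw [hpq]
      _ = q ^ 2 * p ^ 2 - h • (q * p) - h • (q * p) := by
          rw [sub_mul, smul_mul_assoc, one_mul, mul_sub, mul_smul_comm]
          have : q * (q * p * p) = q ^ 2 * p ^ 2 := by noncomm_ring
          rw [this]
      _ = q ^ 2 * p ^ 2 - (2 * h) • (q * p) := by module
  have hx2y2 : x * (x * y) * y
      = q ^ 2 * p ^ 2 + (2 * b - 2 * h) • (q * p) + (b ^ 2 - b * h) • (1 : R) := by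
    rw [hx2y, hy]
    have expand : (-(b • x) - p) * (-(b • q) - q ^ 2 * p)
        = (b * b) • (x * q) + b • (x * (q ^ 2 * p)) + b • (p * q) + p * (q ^ 2 * p) := by
      simp only [sub_mul, neg_mul, mul_sub, mul_neg, smul_mul_assoc, mul_smul_comm, smul_smul]
      module
    rw [expand, hxq, hxqq, hpq, hpq2]
    module
  have key : H₀ = H + (a * b + b * h) • (1 : R) := by
    rw [hH₀, hH]
    have e1 : x ^ 2 * y ^ 2 = x * (x * y) * y := by noncomm_ring
    have e2 : x ^ 2 * y = x * (x * y) := by noncomm_ring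
    rw [e1, e2, hx2y2, hx2y, hxy, hy]
    module
  constructor <;>
  · rw [key, mul_add, add_mul, mul_smul_comm, smul_mul_assoc, mul_one, one_mul]
    abel
end

section
/- Let R be an associative unital ℂ-algebra, q, p ∈ R with qp − pq = h·1 (h ∈ ℂ), q invertible, and a, b, t ∈ ℂ. Put H_III = q²p² − q²p + (a+b)qp − bq + tp, and set x = q⁻¹, y = q² − aq − q²p. Then: (i) xy − yx = h·1 (the chart-2 transformation for quantum Painlevé III is canonical); and (ii) with H₂(x,y) = x²y² − tx²y + (a−b−2h)xy − atx − y (normally ordered, x-powers to the left), one has [x, H_III] = [x, H₂(x,y)] and [y, H_III] = [y, H₂(x,y)], i.e. the transformed system is the polynomial Hamiltonian system with Hamiltonian H₂. -/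
/-- The Takano chart-2 transformation `x = q⁻¹`, `y = q² - aq - q²p` for quantum
Painlevé III is canonical, and it transforms the system into the polynomial
Hamiltonian system with `H₂ = x²y² - tx²y + (a-b-2h)xy - atx - y`. -/
theorem quantum_PIII_chart2_hamiltonian
    {R : Type*} [Ring R] [Algebra ℂ R]
    (h a b t : ℂ) (q p : R) [Invertible q]
    (hcomm : q * p - p * q = h • (1 : R))
    (H x y H₂ : R)
    (hH : H = q ^ 2 * p ^ 2 - q ^ 2 * p + (a + b) • (q * p) - b • q + t • p)
    (hx : x = ⅟q) (hy : y = q ^ 2 - a • q - q ^ 2 * p)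
    (hH₂ : H₂ = x ^ 2 * y ^ 2 - t • (x ^ 2 * y) + (a - b - 2 * h) • (x * y)
        - (a * t) • x - y) :
    x * y - y * x = h • (1 : R) ∧
    x * H - H * x = x * H₂ - H₂ * x ∧
    y * H - H * y = y * H₂ - H₂ * y := by
  have hpq : p * q = q * p - h • 1 := by linear_combination (norm := noncomm_ring) -hcomm
  have hpq' : ∀ z : R, p * (q * z) = q * (p * z) - h • z := by
    intro z
    rw [← mul_assoc, hpq, sub_mul, smul_mul_assoc, one_mul, mul_assoc]
  have hqu : q * ⅟q = 1 := mul_invOf_self q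
  have huq : ⅟q * q = 1 := invOf_mul_self q
  have hpu : p * ⅟q = ⅟q * p + h • (⅟q * ⅟q) := by
    have h1 : p * (q * ⅟q) = q * (p * ⅟q) - h • ⅟q := hpq' ⅟q
    rw [hqu, mul_one] at h1
    have h2 := congrArg (fun z => ⅟q * z) h1
    simp only [mul_sub, mul_smul_comm, ← mul_assoc, huq, one_mul] at h2
    linear_combination (norm := noncomm_ring) -h2
  have hpu' : ∀ z : R, p * (⅟q * z) = ⅟q * (p * z) + h • (⅟q * (⅟q * z)) := by
    intro z
    rw [← mul_assoc, hpu, add_mul, smul_mul_assoc, mul_assoc, mul_assoc]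
  have huq' : ∀ z : R, ⅟q * (q * z) = z := fun z => by rw [← mul_assoc, huq, one_mul]
  have hqu' : ∀ z : R, q * (⅟q * z) = z := fun z => by rw [← mul_assoc, hqu, one_mul]
  subst hH hx hy hH₂
  refine ⟨?_, ?_, ?_⟩ <;>
  · simp only [pow_two, mul_sub, sub_mul, mul_add, add_mul, mul_assoc, smul_mul_assoc,
      mul_smul_comm, hpu', hpu, hpq', hpq, hqu, huq, hqu', huq', one_mul, mul_one, smul_add,
      smul_sub, smul_smul]
    module
end

section
/- Let R be an associative unital ℂ-algebra, q, p ∈ R with qp − pq = h·1 (h ∈ ℂ), and suppose p is invertible in R. For a parameter a ∈ ℂ, set x = ap − qp² and y = p⁻¹. Then xy − yx = h·1; i.e., the Takano chart-1 change of variables for the quantum Painlevé IV (and Painlevé V) equation is a canonical transformation. -/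
/-- Takano chart-1 change of variables for quantum Painlevé IV (and V) is
canonical: if `q p - p q = h • 1` and `p` is invertible, then with
`x = ap - qp²` and `y = p⁻¹` one has `x y - y x = h • 1`. -/
theorem quantum_PIV_chart1_canonical
    {R : Type*} [Ring R] [Algebra ℂ R]
    (h a : ℂ) (q p : R) [Invertible p]
    (hcomm : q * p - p * q = h • (1 : R))
    (x y : R) (hx : x = a • p - q * p ^ 2) (hy : y = ⅟p) :
    x * y - y * x = h • (1 : R) := by
  subst hx hy
  have hqp : q * p = p * q + h • (1 : R) := by rw [← hcomm]; noncomm_ring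
  have key : ⅟p * (q * p) = q + h • ⅟p := by
    rw [hqp, mul_add, ← mul_assoc, invOf_mul_self, one_mul, mul_smul_comm, mul_one]
  calc (a • p - q * p ^ 2) * ⅟p - ⅟p * (a • p - q * p ^ 2)
      = a • (p * ⅟p) - q * p * (p * ⅟p) - (a • (⅟p * p) - ⅟p * (q * p) * p) := by
        noncomm_ring
    _ = ⅟p * (q * p) * p - q * p := by
        rw [mul_invOf_self, invOf_mul_self]; noncomm_ring
    _ = h • (1 : R) := by
        rw [key, add_mul, smul_mul_assoc, invOf_mul_self]; noncomm_ring
end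

section
/- Let R be an associative unital ℂ-algebra, q, p ∈ R with qp − pq = h·1 (h ∈ ℂ), p invertible, and a, b, t ∈ ℂ. Put H_IV = tqp − qp² − q²p + ap − bq, and set x = ap − qp², y = p⁻¹. Let H₁(x,y) = −x²y³ + (2a+b+2h)xy² − txy + x − a(a+b+h)y (normally ordered, x-powers to the left). Then [x, H_IV] = [x, H₁(x,y)] and [y, H_IV] = [y, H₁(x,y)]; that is, the quantum Painlevé IV system is transformed in the chart-1 coordinates into the polynomial Hamiltonian system with Hamiltonian H₁. -/
/-- In the Takano chart-1 coordinates `x = ap - qp²`, `y = p⁻¹`, the quantum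
Painlevé IV system becomes the polynomial Hamiltonian system with
`H₁ = -x²y³ + (2a+b+2h)xy² - txy + x - a(a+b+h)y`. -/
theorem quantum_PIV_chart1_hamiltonian
    {R : Type*} [Ring R] [Algebra ℂ R]
    (h a b t : ℂ) (q p : R) [Invertible p]
    (hcomm : q * p - p * q = h • (1 : R))
    (H x y H₁ : R)
    (hH : H = t • (q * p) - q * p ^ 2 - q ^ 2 * p + a • p - b • q)
    (hx : x = a • p - q * p ^ 2) (hy : y = ⅟p)
    (hH₁ : H₁ = -(x ^ 2 * y ^ 3) + (2 * a + b + 2 * h) • (x * y ^ 2)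
        - t • (x * y) + x - (a * (a + b + h)) • y) :
    x * H - H * x = x * H₁ - H₁ * x ∧
    y * H - H * y = y * H₁ - H₁ * y := by
  have hpq : p * q = q * p - h • (1 : R) := by rw [← hcomm]; abel
  have hpq' : ∀ z : R, p * (q * z) = q * (p * z) - h • z := by
    intro z; rw [← mul_assoc, hpq, sub_mul, mul_assoc, smul_mul_assoc, one_mul]
  have hpu' : ∀ z : R, p * (⅟p * z) = z := by
    intro z; rw [← mul_assoc, mul_invOf_self, one_mul]
  have hup' : ∀ z : R, ⅟p * (p * z) = z := by
    intro z; rw [← mul_assoc, invOf_mul_self, one_mul]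
  have huq : ⅟p * q = q * ⅟p + h • (⅟p * ⅟p) := by
    have : ⅟p * (q * (p * ⅟p)) = ⅟p * ((q * p) * ⅟p) := by rw [mul_assoc]
    rw [mul_invOf_self, mul_one] at this
    rw [this]
    have h2 : q * p = p * q + h • (1 : R) := by rw [← hcomm]; abel
    rw [h2, add_mul, mul_add, mul_assoc, hup', smul_mul_assoc, one_mul, mul_smul_comm]
  have huq' : ∀ z : R, ⅟p * (q * z) = q * (⅟p * z) + h • (⅟p * (⅟p * z)) := by
    intro z
    rw [← mul_assoc, huq, add_mul, mul_assoc, smul_mul_assoc, mul_assoc]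
  have key : H₁ = H - (t * a) • (1 : R) := by
    subst hH hx hy hH₁
    simp only [pow_succ, pow_zero, one_mul, mul_add, add_mul, mul_sub, sub_mul,
      smul_mul_assoc, mul_smul_comm, smul_smul, mul_assoc, neg_mul, mul_neg,
      hpq', hpu', hup', huq', mul_invOf_self, mul_one]
    module
  refine ⟨?_, ?_⟩ <;> rw [key] <;>
    simp only [mul_sub, sub_mul, mul_smul_comm, smul_mul_assoc, mul_one, one_mul] <;> abel
end

section
/- Let R be an associative unital ℂ-algebra, q, p ∈ R with qp − pq = h·1 (h ∈ ℂ), q invertible, and a, b, t ∈ ℂ. Put H_IV = tqp − qp² − q²p + ap − bq, and set x = q⁻¹, y = −bq − q²p. Let H₂(x,y) = −x³y² + (−a−2b+2h)x²y − txy − b(a+b−h)x + y (normally ordered, x-powers to the left). Then [x, H_IV] = [x, H₂(x,y)] and [y, H_IV] = [y, H₂(x,y)]; that is, the quantum Painlevé IV system is transformed in the chart-2 coordinates into the polynomial Hamiltonian system with Hamiltonian H₂. -/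
/-- In the Takano chart-2 coordinates `x = q⁻¹`, `y = -bq - q²p`, the quantum
Painlevé IV system becomes the polynomial Hamiltonian system with
`H₂ = -x³y² + (-a-2b+2h)x²y - txy - b(a+b-h)x + y`. -/
theorem quantum_PIV_chart2_hamiltonian
    {R : Type*} [Ring R] [Algebra ℂ R]
    (h a b t : ℂ) (q p : R) [Invertible q]
    (hcomm : q * p - p * q = h • (1 : R))
    (H x y H₂ : R)
    (hH : H = t • (q * p) - q * p ^ 2 - q ^ 2 * p + a • p - b • q)
    (hx : x = ⅟q) (hy : y = -(b • q) - q ^ 2 * p)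
    (hH₂ : H₂ = -(x ^ 3 * y ^ 2) + (-a - 2 * b + 2 * h) • (x ^ 2 * y)
        - t • (x * y) - (b * (a + b - h)) • x + y) :
    x * H - H * x = x * H₂ - H₂ * x ∧
    y * H - H * y = y * H₂ - H₂ * y := by
  have e6 : x * q = 1 := by rw [hx]; exact invOf_mul_self q
  have e8 : q * x = 1 := by rw [hx]; exact mul_invOf_self q
  have e5 : ∀ z : R, x * (q * z) = z := by intro z; rw [← mul_assoc, e6, one_mul]
  have e7 : ∀ z : R, q * (x * z) = z := by intro z; rw [← mul_assoc, e8, one_mul]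
  have e2 : p * q = q * p - h • (1 : R) := by
    rw [← hcomm]; abel
  have e1 : ∀ z : R, p * (q * z) = q * (p * z) - h • z := by
    intro z
    rw [← mul_assoc, e2, sub_mul, mul_assoc, smul_mul_assoc, one_mul]
  have e4 : p * x = x * p + h • (x * x) := by
    have : x * ((q * p - p * q) * x) = x * ((h • (1:R)) * x) := by rw [hcomm]
    rw [sub_mul, mul_sub, ← mul_assoc, ← mul_assoc, e6, one_mul, mul_assoc, e8, mul_one,
      smul_mul_assoc, one_mul, mul_smul_comm] at this
    linear_combination (norm := noncomm_ring) this
  have e3 : ∀ z : R, p * (x * z) = x * (p * z) + h • (x * (x * z)) := by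
    intro z
    rw [← mul_assoc, e4, add_mul, mul_assoc, smul_mul_assoc, mul_assoc]
  subst hH hH₂ hy
  constructor <;>
  · simp only [pow_succ, pow_zero, one_mul, mul_add, add_mul, mul_sub, sub_mul, mul_neg,
      neg_mul, mul_smul_comm, smul_mul_assoc, mul_assoc, e1, e2, e3, e4, e5, e6, e7, e8,
      mul_one, one_mul, smul_add, smul_sub, smul_smul, smul_neg]
    module
end

section
/- Let R be an associative unital ℂ-algebra, q, p ∈ R with qp − pq = h·1 (h ∈ ℂ), and suppose p is invertible in R. For a parameter c ∈ ℂ, set x = cp − qp² + p² and y = p⁻¹. Then xy − yx = h·1; i.e., the Takano chart-3 change of variables for the quantum Painlevé V equation is a canonical transformation. -/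
/-- Takano chart-3 change of variables for quantum Painlevé V is canonical:
if `q p - p q = h • 1` and `p` is invertible, then with `x = cp - qp² + p²`
and `y = p⁻¹` one has `x y - y x = h • 1`. -/
theorem quantum_PV_chart3_canonical
    {R : Type*} [Ring R] [Algebra ℂ R]
    (h c : ℂ) (q p : R) [Invertible p]
    (hcomm : q * p - p * q = h • (1 : R))
    (x y : R) (hx : x = c • p - q * p ^ 2 + p ^ 2) (hy : y = ⅟p) :
    x * y - y * x = h • (1 : R) := by
  subst hx hy
  have h1 : q * p = p * q + h • (1 : R) := by
    rw [← hcomm]; abel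
  have k1 : q * p ^ 2 * ⅟p = q * p := by
    rw [sq, ← mul_assoc, mul_assoc (q * p), mul_invOf_self, mul_one]
  have k2 : p ^ 2 * ⅟p = p := by
    rw [sq, mul_assoc, mul_invOf_self, mul_one]
  have k3 : ⅟p * (q * p ^ 2) = q * p + h • (1 : R) := by
    rw [sq, ← mul_assoc q p p]
    nth_rewrite 1 [h1]
    rw [add_mul, smul_mul_assoc, one_mul, mul_add,
      ← mul_assoc, ← mul_assoc, invOf_mul_self, one_mul, mul_smul_comm,
      invOf_mul_self]
  have k4 : ⅟p * p ^ 2 = p := by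
    rw [sq, ← mul_assoc, invOf_mul_self, one_mul]
  rw [add_mul, sub_mul, mul_add, mul_sub, k1, k2, k3, k4,
    smul_mul_assoc, mul_invOf_self, mul_smul_comm, invOf_mul_self]
  abel
end

section
/- Let R be an associative unital ℂ-algebra, q, p ∈ R with qp − pq = h·1 (h ∈ ℂ), q invertible, and a, b, c, t ∈ ℂ. Put H_V = q²p² + tq²p − qp² − tqp − (a+c)qp + ap + btq, and set x = q⁻¹, y = −bq − q²p. Let H₂(x,y) = −x³y² + x²y² + (−a−2b+2h)x²y + (a+2b+c−2h+t)xy − b(a+b−h)x − ty (normally ordered, x-powers to the left). Then [x, H_V] = [x, H₂(x,y)] and [y, H_V] = [y, H₂(x,y)]; that is, the quantum Painlevé V system is transformed in the chart-2 coordinates into the polynomial Hamiltonian system with Hamiltonian H₂. -/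
/-- In the Takano chart-2 coordinates `x = q⁻¹`, `y = -bq - q²p`, the quantum
Painlevé V system becomes the polynomial Hamiltonian system with
`H₂ = -x³y² + x²y² + (-a-2b+2h)x²y + (a+2b+c-2h+t)xy - b(a+b-h)x - ty`. -/
theorem quantum_PV_chart2_hamiltonian
    {R : Type*} [Ring R] [Algebra ℂ R]
    (h a b c t : ℂ) (q p : R) [Invertible q]
    (hcomm : q * p - p * q = h • (1 : R))
    (H x y H₂ : R)
    (hH : H = q ^ 2 * p ^ 2 + t • (q ^ 2 * p) - q * p ^ 2 - t • (q * p)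
        - (a + c) • (q * p) + a • p + (b * t) • q)
    (hx : x = ⅟q) (hy : y = -(b • q) - q ^ 2 * p)
    (hH₂ : H₂ = -(x ^ 3 * y ^ 2) + x ^ 2 * y ^ 2
        + (-a - 2 * b + 2 * h) • (x ^ 2 * y)
        + (a + 2 * b + c - 2 * h + t) • (x * y)
        - (b * (a + b - h)) • x - t • y) :
    x * H - H * x = x * H₂ - H₂ * x ∧
    y * H - H * y = y * H₂ - H₂ * y := by
  have hpq : p * q = q * p - h • (1 : R) := by
    rw [← hcomm]; abel
  have r1 : ∀ z : R, p * (q * z) = q * (p * z) - h • z := fun z => by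
    rw [← mul_assoc, hpq, sub_mul, mul_assoc, smul_mul_assoc, one_mul]
  have r3 : ∀ z : R, ⅟q * (q * z) = z := fun z => by
    rw [← mul_assoc, invOf_mul_self, one_mul]
  have r4 : ⅟q * q = (1 : R) := invOf_mul_self q
  have hs : H₂ = H + (b * (h - a - b - c - t)) • (1 : R) := by
    subst hH hH₂ hx hy
    simp only [pow_succ, pow_zero, one_mul, mul_add, add_mul, mul_sub, sub_mul,
      neg_mul, mul_neg, neg_add, neg_neg, neg_sub, smul_mul_assoc, mul_smul_comm,
      smul_smul, mul_one, mul_assoc, r1, hpq, r3, r4, smul_sub, smul_add, smul_neg]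
    match_scalars <;> ring
  constructor <;> rw [hs] <;>
    simp only [mul_add, add_mul, mul_smul_comm, smul_mul_assoc, mul_one, one_mul] <;>
    abel
end

section
/- Let R be an associative unital ℂ-algebra, q, p ∈ R with qp − pq = h·1 (h ∈ ℂ), q invertible, and a, b, c, d, t ∈ ℂ. Put H_VI = q³p² − (1+t)q²p² − (a+b+c)q²p + tqp² + (b+c+(a+b)t)qp − d(a+b+c+d−h)q − btp, and set x = q⁻¹, y = −dq − q²p. Then: (i) xy − yx = h·1; and (ii) with H₀(x,y) = tx³y² − (1+t)x²y² + (b+2d−2h)tx²y + xy² + (−b−c−2d+2h−(a+b+2d−2h)t)xy + d(b+d−h)tx + (a+b+c+2d−2h)y (normally ordered, x-powers to the left), one has [x, H_VI] = [x, H₀(x,y)] and [y, H_VI] = [y, H₀(x,y)]. Hence the quantum Painlevé VI system is transformed in the chart-0 coordinates into the polynomial Hamiltonian system with Hamiltonian H₀. -/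
/-- The Takano chart-0 transformation `x = q⁻¹`, `y = -dq - q²p` for quantum
Painlevé VI is canonical, and it transforms the system into the polynomial
Hamiltonian system with Hamiltonian
`H₀ = tx³y² - (1+t)x²y² + (b+2d-2h)tx²y + xy²
      + (-b-c-2d+2h-(a+b+2d-2h)t)xy + d(b+d-h)tx + (a+b+c+2d-2h)y`. -/
theorem quantum_PVI_chart0_hamiltonian
    {R : Type*} [Ring R] [Algebra ℂ R]
    (h a b c d t : ℂ) (q p : R) [Invertible q]
    (hcomm : q * p - p * q = h • (1 : R))
    (H x y H₀ : R)
    (hH : H = q ^ 3 * p ^ 2 - (1 + t) • (q ^ 2 * p ^ 2)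
        - (a + b + c) • (q ^ 2 * p) + t • (q * p ^ 2)
        + (b + c + (a + b) * t) • (q * p)
        - (d * (a + b + c + d - h)) • q - (b * t) • p)
    (hx : x = ⅟q) (hy : y = -(d • q) - q ^ 2 * p)
    (hH₀ : H₀ = t • (x ^ 3 * y ^ 2) - (1 + t) • (x ^ 2 * y ^ 2)
        + ((b + 2 * d - 2 * h) * t) • (x ^ 2 * y) + x * y ^ 2
        + (-b - c - 2 * d + 2 * h - (a + b + 2 * d - 2 * h) * t) • (x * y)
        + (d * (b + d - h) * t) • x + (a + b + c + 2 * d - 2 * h) • y) :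
    x * y - y * x = h • (1 : R) ∧
    x * H - H * x = x * H₀ - H₀ * x ∧
    y * H - H * y = y * H₀ - H₀ * y := by
  have hqu : q * ⅟q = 1 := mul_invOf_self q
  have huq : ⅟q * q = 1 := invOf_mul_self q
  have hqu' : ∀ z : R, q * (⅟q * z) = z := fun z => by rw [← mul_assoc, hqu, one_mul]
  have huq' : ∀ z : R, ⅟q * (q * z) = z := fun z => by rw [← mul_assoc, huq, one_mul]
  have hpq : p * q = q * p - h • (1 : R) := by rw [← hcomm]; abel
  have hpq' : ∀ z : R, p * (q * z) = q * (p * z) - h • z := fun z => by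
    rw [← mul_assoc, hpq, sub_mul, mul_assoc, smul_mul_assoc, one_mul]
  have hpu : p * ⅟q = ⅟q * p + h • (⅟q * ⅟q) := by
    have key : ⅟q * (p * (q * ⅟q)) = ⅟q * ((q * p - h • (1 : R)) * ⅟q) := by
      rw [← mul_assoc p, hpq]
    simp only [hqu, mul_one, sub_mul, smul_mul_assoc, one_mul, mul_sub, mul_assoc, huq',
      mul_smul_comm] at key
    rw [eq_sub_iff_add_eq] at key
    exact key.symm
  have hpu' : ∀ z : R, p * (⅟q * z) = ⅟q * (p * z) + h • (⅟q * (⅟q * z)) := fun z => by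
    rw [← mul_assoc, hpu, add_mul, mul_assoc, smul_mul_assoc, mul_assoc]
  subst hx hy hH hH₀
  refine ⟨?_, ?_, ?_⟩ <;>
  · simp only [pow_succ, pow_zero, one_mul, mul_add, add_mul, mul_sub, sub_mul, neg_mul,
      mul_neg, mul_assoc, smul_mul_assoc, mul_smul_comm, smul_smul, smul_sub, smul_add,
      smul_neg, mul_one, hpq', hpu', hqu', huq', hpq, hpu, hqu, huq]
    module
end

section
/- Let R be an associative unital ℂ-algebra, q, p ∈ R with qp − pq = h·1 (h ∈ ℂ), p invertible, and a, b, c, d, t ∈ ℂ. Put H_VI = q³p² − (1+t)q²p² − (a+b+c)q²p + tqp² + (b+c+(a+b)t)qp − d(a+b+c+d−h)q − btp, and set x = bp − qp², y = p⁻¹. Then: (i) xy − yx = h·1; and (ii) with H₂(x,y) = −x³y⁴ + (−a+2b−c+6h)x²y³ − (1+t)x²y² + (−b²+b(2c+d−7h)+(c+d−3h)(d+2h)+a(2b+d+2h))xy² + (b−c+2h−(a−b−2h)t)xy − tx − b(a+c+d−2h)(b+d+h)y (normally ordered, x-powers to the left), one has [x, H_VI] = [x, H₂(x,y)] and [y,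 H_VI] = [y, H₂(x,y)]. Hence the quantum Painlevé VI system is transformed in the chart-2 coordinates into the polynomial Hamiltonian system with Hamiltonian H₂. -/
/-- The Takano chart-2 transformation `x = bp - qp²`, `y = p⁻¹` for quantum
Painlevé VI is canonical, and it transforms the system into the polynomial
Hamiltonian system with Hamiltonian
`H₂ = -x³y⁴ + (-a+2b-c+6h)x²y³ - (1+t)x²y²
      + (-b²+b(2c+d-7h)+(c+d-3h)(d+2h)+a(2b+d+2h))xy²
      + (b-c+2h-(a-b-2h)t)xy - tx - b(a+c+d-2h)(b+d+h)y`. -/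
theorem quantum_PVI_chart2_hamiltonian
    {R : Type*} [Ring R] [Algebra ℂ R]
    (h a b c d t : ℂ) (q p : R) [Invertible p]
    (hcomm : q * p - p * q = h • (1 : R))
    (H x y H₂ : R)
    (hH : H = q ^ 3 * p ^ 2 - (1 + t) • (q ^ 2 * p ^ 2)
        - (a + b + c) • (q ^ 2 * p) + t • (q * p ^ 2)
        + (b + c + (a + b) * t) • (q * p)
        - (d * (a + b + c + d - h)) • q - (b * t) • p)
    (hx : x = b • p - q * p ^ 2) (hy : y = ⅟p)
    (hH₂ : H₂ = -(x ^ 3 * y ^ 4) + (-a + 2 * b - c + 6 * h) • (x ^ 2 * y ^ 3)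
        - (1 + t) • (x ^ 2 * y ^ 2)
        + (-b ^ 2 + b * (2 * c + d - 7 * h) + (c + d - 3 * h) * (d + 2 * h)
            + a * (2 * b + d + 2 * h)) • (x * y ^ 2)
        + (b - c + 2 * h - (a - b - 2 * h) * t) • (x * y)
        - t • x - (b * (a + c + d - 2 * h) * (b + d + h)) • y) :
    x * y - y * x = h • (1 : R) ∧
    x * H - H * x = x * H₂ - H₂ * x ∧
    y * H - H * y = y * H₂ - H₂ * y := by
  have hpq1 : p * q = q * p - h • (1 : R) := by
    have := hcomm; linear_combination (norm := noncomm_ring) -this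
  have hpq : ∀ X : R, p * (q * X) = q * (p * X) - h • X := by
    intro X
    rw [← mul_assoc, hpq1, sub_mul, mul_assoc, smul_mul_assoc, one_mul]
  have hipi : ∀ X : R, ⅟p * (p * X) = X := fun X => invOf_mul_cancel_left p X
  have hpi : ∀ X : R, p * (⅟p * X) = X := fun X => mul_invOf_cancel_left p X
  have hqp : q * p = p * q + h • (1 : R) := by rw [hpq1, sub_add_cancel]
  have hiq1 : ⅟p * q = q * ⅟p + h • (⅟p * ⅟p) := by
    calc ⅟p * q = ⅟p * (q * (p * ⅟p)) := by rw [mul_invOf_self, mul_one]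
      _ = ⅟p * ((q * p) * ⅟p) := by rw [mul_assoc]
      _ = ⅟p * ((p * q + h • (1 : R)) * ⅟p) := by rw [hqp]
      _ = q * ⅟p + h • (⅟p * ⅟p) := by
          rw [add_mul, mul_add, mul_assoc p q, hipi, smul_mul_assoc, one_mul,
            mul_smul_comm]
  have hiq : ∀ X : R, ⅟p * (q * X) = q * (⅟p * X) + h • (⅟p * (⅟p * X)) := by
    intro X
    rw [← mul_assoc, hiq1, add_mul, smul_mul_assoc]
    simp only [mul_assoc]
  have key : H₂ = H + (b * (h - c + (h - a) * t)) • (1 : R) := by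
    subst hx hy hH hH₂
    simp only [pow_succ, pow_zero, one_mul, mul_add, add_mul, mul_sub, sub_mul,
      mul_assoc, smul_mul_assoc, mul_smul_comm, mul_one, neg_mul, mul_neg,
      hpq, hiq, hipi, hpi, hpq1, hiq1, mul_invOf_self, invOf_mul_self,
      smul_add, smul_sub, smul_smul, smul_neg, neg_neg, neg_add, neg_sub]
    match_scalars <;> ring
  have hsmul_comm : ∀ (s : ℂ) (u : R), u * (s • (1 : R)) = (s • (1 : R)) * u := by
    intro s u
    rw [mul_smul_comm, smul_mul_assoc, one_mul, mul_one]
  refine ⟨?_, ?_, ?_⟩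
  · subst hx hy
    simp only [pow_succ, pow_zero, one_mul, mul_add, add_mul, mul_sub, sub_mul,
      mul_assoc, smul_mul_assoc, mul_smul_comm, mul_one, neg_mul, mul_neg,
      hpq, hiq, hipi, hpi, hpq1, hiq1, mul_invOf_self, invOf_mul_self,
      smul_add, smul_sub, smul_smul, smul_neg, neg_neg, neg_add, neg_sub]
    match_scalars <;> ring
  · rw [key, mul_add, add_mul, hsmul_comm]
    abel
  · rw [key, mul_add, add_mul, hsmul_comm]
    abel
end

section
/- Coincidence with Nagoya's quantum Painlevé III Hamiltonian. Let R be an associative unital ℂ-algebra, q, p ∈ R with qp − pq = h·1 (h ∈ ℂ), and a, b, c, t ∈ ℂ. Put H_III = q²p² − q²p + (a+b)qp − bq + tp, and set α₀ = b + h, α₂ = a + h. Define Nagoya's Hamiltonian Ĥ_III = (1/4)(pq(p−1)q + (p−1)qpq + qpq(p−1) + q(p−1)qp) + (1/2)(α₀+α₂)(qp+pq) − α₀q + tp. Then there exists a scalar γ ∈ ℂ such that Ĥ_III = H_III + γ·1; i.e., the quantum Painlevé III Hamiltonian characterized by the holomorphy property coincides with Nagoya's Hamiltonian up to redefinition of parameters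 and an additive central constant. -/
/-- Coincidence with Nagoya's quantum Painlevé III Hamiltonian: with
`α₀ = b + h`, `α₂ = a + h`, Nagoya's Hamiltonian
`HN = (1/4)(pq(p-1)q + (p-1)qpq + qpq(p-1) + q(p-1)qp) + (1/2)(α₀+α₂)(qp+pq) - α₀q + tp`
equals `H_III = q²p² - q²p + (a+b)qp - bq + tp` up to an additive central
constant. -/
theorem quantum_PIII_coincides_with_Nagoya
    {R : Type*} [Ring R] [Algebra ℂ R]
    (h a b c t : ℂ) (q p : R)
    (hcomm : q * p - p * q = h • (1 : R))
    (α₀ α₂ : ℂ) (hα₀ : α₀ = b + h) (hα₂ : α₂ = a + h)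
    (H HN : R)
    (hH : H = q ^ 2 * p ^ 2 - q ^ 2 * p + (a + b) • (q * p) - b • q + t • p)
    (hHN : HN = (1 / 4 : ℂ) • (p * q * (p - 1) * q + (p - 1) * q * p * q
        + q * p * q * (p - 1) + q * (p - 1) * q * p)
        + ((α₀ + α₂) / 2) • (q * p + p * q) - α₀ • q + t • p) :
    ∃ γ : ℂ, HN = H + γ • (1 : R) := by
  refine ⟨-(h * (a + b + h)) / 2, ?_⟩
  set k : R := h • (1 : R) with hk
  have hpq : p * q = q * p - k := by rw [eq_sub_iff_add_eq, ← eq_sub_iff_add_eq']; exact hcomm.symm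
  have hkq : k * q = q * k := by simp [hk, smul_mul_assoc, mul_smul_comm]
  have hkp : k * p = p * k := by simp [hk, smul_mul_assoc, mul_smul_comm]
  have hpq' : ∀ x : R, p * (q * x) = q * (p * x) - k * x := by
    intro x; rw [← mul_assoc, hpq, sub_mul, mul_assoc]
  have hkq' : ∀ x : R, k * (q * x) = q * (k * x) := by
    intro x; rw [← mul_assoc, hkq, mul_assoc]
  have hkp' : ∀ x : R, k * (p * x) = p * (k * x) := by
    intro x; rw [← mul_assoc, hkp, mul_assoc]
  subst hα₀ hα₂ hH hHN
  simp only [sub_mul, mul_sub, one_mul, mul_one, smul_sub, smul_add, sub_smul, add_smul,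
    smul_smul, pow_two]
  simp only [mul_assoc, hpq, hpq', hkq, hkq', hkp, hkp', mul_sub, sub_mul, smul_sub, smul_add]
  simp only [hk, smul_mul_assoc, mul_smul_comm, smul_smul, mul_one, one_mul]
  module
end

section
/- Coincidence with Nagoya's quantum Painlevé V Hamiltonian. Let R be an associative unital ℂ-algebra, q, p ∈ R with qp − pq = h·1 (h ∈ ℂ), and a, b, c, t ∈ ℂ. Put H_V = q²p² + tq²p − qp² − tqp − (a+c)qp + ap + btq, and set α₁ = a − h, α₂ = b + h, α₃ = c − h. Define Nagoya's Hamiltonian Ĥ_V = (1/2)(qpqp + pqpq) − pqp + tqpq − (t/2)(qp + pq) + α₁p + α₂tq − (1/2)(α₁+α₃)(qp + pq). Then there exists a scalar γ ∈ ℂ[t] (a complex polynomial in t, central in R) such that Ĥ_V = H_V + γ·1; i.e., the quantum Painlevé V Hamiltonian characterized by the holomorphy property coincides with Nagoya's Hamiltonian up to redefinition of parameters and an additive central term. -/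
/-- Coincidence with Nagoya's quantum Painlevé V Hamiltonian: with
`α₁ = a - h`, `α₂ = b + h`, `α₃ = c - h`, Nagoya's Hamiltonian
`HN = (1/2)(qpqp + pqpq) - pqp + tqpq - (t/2)(qp+pq) + α₁p + α₂tq - (1/2)(α₁+α₃)(qp+pq)`
equals `H_V = q²p² + tq²p - qp² - tqp - (a+c)qp + ap + btq` up to an additive
central term `γ • 1` with `γ ∈ ℂ[t]` a complex polynomial in `t`. -/
theorem quantum_PV_coincides_with_Nagoya
    {R : Type*} [Ring R] [Algebra ℂ R]
    (h a b c : ℂ) (q p : R)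
    (hcomm : q * p - p * q = h • (1 : R))
    (α₁ α₂ α₃ : ℂ) (hα₁ : α₁ = a - h) (hα₂ : α₂ = b + h) (hα₃ : α₃ = c - h)
    (H HN : ℂ → R)
    (hH : ∀ t : ℂ, H t = q ^ 2 * p ^ 2 + t • (q ^ 2 * p) - q * p ^ 2
        - t • (q * p) - (a + c) • (q * p) + a • p + (b * t) • q)
    (hHN : ∀ t : ℂ, HN t = (1 / 2 : ℂ) • (q * p * q * p + p * q * p * q)
        - p * q * p + t • (q * p * q) - (t / 2) • (q * p + p * q)
        + α₁ • p + (α₂ * t) • q - ((α₁ + α₃) / 2) • (q * p + p * q)) :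
    ∃ γ : Polynomial ℂ, ∀ t : ℂ, HN t = H t + (γ.eval t) • (1 : R) := by
  refine ⟨Polynomial.C ((h*(a+c)-h^2)/2) + Polynomial.C (h/2) * Polynomial.X, fun t => ?_⟩
  have hpq : p * q = q * p - h • (1 : R) := by rw [← hcomm]; abel
  rw [hHN, hH, hα₁, hα₂, hα₃]
  simp only [Polynomial.eval_add, Polynomial.eval_mul, Polynomial.eval_C, Polynomial.eval_X,
    pow_two]
  have hpq' : ∀ x : R, p * (q * x) = q * (p * x) - h • x := by
    intro x
    rw [← mul_assoc, hpq, sub_mul, smul_mul_assoc, one_mul, mul_assoc]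
  simp only [mul_assoc, hpq, hpq', mul_sub, sub_mul, smul_mul_assoc, mul_smul_comm, mul_one,
    one_mul, smul_smul]
  module
end
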